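/- If j₁ = j₂ = j₃ = j with j > 0, then the system b₁(b₂² + b₃²) = j₁, b₂(b₁² + b₃²) = j₂, b₃(b₁² + b₂²) = j₃ has exactly one real solution, namely b₁ = b₂ = b₃ = (j/2)^{1/3} (real cube root). -/
import Mathlib


/-- The real cube root. -/
noncomputable def cbrt (x : ℝ) : ℝ :=
  if 0 ≤ x then x ^ ((1 : ℝ) / 3) else -((-x) ^ ((1 : ℝ) / 3))

lemma cbrt_of_cube {b x : ℝ} (hb : 0 ≤ b) (h : b ^ 3 = x) : cbrt x = b := by
  have hx : 0 ≤ x := h ▸ by positivity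
  rw [cbrt, if_pos hx, ← h, ← Real.rpow_natCast b 3, ← Real.rpow_mul hb]
  norm_num

/-- If `j₁ = j₂ = j₃ = j > 0` then the system `b₁(b₂² + b₃²) = j₁`,
`b₂(b₁² + b₃²) = j₂`, `b₃(b₁² + b₂²) = j₃` has exactly one real solution, namely
`b₁ = b₂ = b₃ = (j/2)^{1/3}`. -/
theorem euclidean_cubic_equal_currents (j j₁ j₂ j₃ : ℝ) (hj : 0 < j)
    (h₁ : j₁ = j) (h₂ : j₂ = j) (h₃ : j₃ = j) :
    ∀ b₁ b₂ b₃ : ℝ,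
      (b₁ * (b₂ ^ 2 + b₃ ^ 2) = j₁ ∧ b₂ * (b₁ ^ 2 + b₃ ^ 2) = j₂ ∧
        b₃ * (b₁ ^ 2 + b₂ ^ 2) = j₃) ↔
      (b₁ = cbrt (j / 2) ∧ b₂ = cbrt (j / 2) ∧ b₃ = cbrt (j / 2)) := by
  intro b₁ b₂ b₃
  simp only [h₁, h₂, h₃]
  constructor
  · rintro ⟨e₁, e₂, e₃⟩
    have hb₁ : 0 < b₁ := by
      by_contra h; push_neg at h
      nlinarith [sq_nonneg b₂, sq_nonneg b₃, mul_nonneg (neg_nonneg.mpr h) (add_nonneg (sq_nonneg b₂) (sq_nonneg b₃))]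
    have hb₂ : 0 < b₂ := by
      by_contra h; push_neg at h
      nlinarith [mul_nonneg (neg_nonneg.mpr h) (add_nonneg (sq_nonneg b₁) (sq_nonneg b₃))]
    have hb₃ : 0 < b₃ := by
      by_contra h; push_neg at h
      nlinarith [mul_nonneg (neg_nonneg.mpr h) (add_nonneg (sq_nonneg b₁) (sq_nonneg b₂))]
    have d12 : (b₁ - b₂) * (b₃ ^ 2 - b₁ * b₂) = 0 := by linear_combination e₁ - e₂
    have d13 : (b₁ - b₃) * (b₂ ^ 2 - b₁ * b₃) = 0 := by linear_combination e₁ - e₃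
    have h12 : b₁ = b₂ := by
      rcases mul_eq_zero.mp d12 with h | h
      · linarith [sub_eq_zero.mp h]
      · have hq : b₃ ^ 2 = b₁ * b₂ := by linarith
        rcases mul_eq_zero.mp d13 with h' | h'
        · have : b₁ = b₃ := by linarith
          nlinarith
        · have hq' : b₂ ^ 2 = b₁ * b₃ := by linarith
          have h23 : b₂ = b₃ := by nlinarith
          nlinarith
    have h13 : b₁ = b₃ := by
      rcases mul_eq_zero.mp d13 with h | h
      · linarith
      · have hq : b₂ ^ 2 = b₁ * b₃ := by linarith
        nlinarith [h12]
    have hcube : b₁ ^ 3 = j / 2 := by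
      rw [← h12, ← h13] at e₁; nlinarith [e₁]
    have := cbrt_of_cube hb₁.le hcube
    exact ⟨this.symm, by rw [← h12]; exact this.symm, by rw [← h13]; exact this.symm⟩
  · rintro ⟨rfl, rfl, rfl⟩
    have hx : (0:ℝ) ≤ j / 2 := by linarith
    have hc : cbrt (j / 2) ^ 3 = j / 2 := by
      rw [cbrt, if_pos hx, ← Real.rpow_natCast _ 3, ← Real.rpow_mul hx]
      norm_num
    refine ⟨?_, ?_, ?_⟩ <;> nlinarith [hc]
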